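/- Let A, B ∈ F₂[[q]] be odd. For every sequence s : ℕ → F₂ there exists a ∈ F₂[[q]] such that for every k ∈ ℕ, the parity of T_{A,B}^k(a) equals s(k). (The parity vector map PV_{A,B} is surjective onto all binary sequences.) -/

import Mathlib

open PowerSeries
open scoped Classical

/-- Shift map on `F₂[[q]]`: equals `x / q` whenever `q ∣ x`. -/
noncomputable def divq (x : PowerSeries (ZMod 2)) : PowerSeries (ZMod 2) :=
  PowerSeries.mk fun n => PowerSeries.coeff (n + 1) x

/-- `T_{A,B}(x) = x/q` if `q ∣ x`, and `(A*x + B)/q` otherwise.  (When `A`, `B`, `x` are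
all odd, `A*x + B` is divisible by `q`, so `divq` computes the true quotient there.) -/
noncomputable def Tab (A B x : PowerSeries (ZMod 2)) : PowerSeries (ZMod 2) :=
  if X ∣ x then divq x else divq (A * x + B)

lemma two_cancel (z : ZMod 2) : z + z = 0 := CharTwo.add_self_eq_zero z

lemma Tab_step (A B : PowerSeries (ZMod 2))
    (hA : PowerSeries.constantCoeff A = 1) (n : ℕ)
    (x y : PowerSeries (ZMod 2))
    (h : ∀ i ≤ n, PowerSeries.coeff i x = PowerSeries.coeff i y) :
    PowerSeries.coeff n (Tab A B x) + PowerSeries.coeff (n + 1) x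
      = PowerSeries.coeff n (Tab A B y) + PowerSeries.coeff (n + 1) y := by
  have h0 : (X ∣ x) ↔ (X ∣ y) := by
    rw [PowerSeries.X_dvd_iff, PowerSeries.X_dvd_iff,
      ← PowerSeries.coeff_zero_eq_constantCoeff_apply,
      ← PowerSeries.coeff_zero_eq_constantCoeff_apply, h 0 (Nat.zero_le n)]
  have key : ∀ z : PowerSeries (ZMod 2),
      PowerSeries.coeff n (divq (A * z + B))
        = (∑ j ∈ Finset.range (n + 1),
            PowerSeries.coeff (j + 1) A * PowerSeries.coeff (n - j) z)
          + PowerSeries.coeff (n + 1) z + PowerSeries.coeff (n + 1) B := by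
    intro z
    rw [divq, PowerSeries.coeff_mk, map_add, PowerSeries.coeff_mul,
      Finset.Nat.sum_antidiagonal_eq_sum_range_succ_mk, Finset.sum_range_succ',
      Nat.sub_zero, ← PowerSeries.coeff_zero_eq_constantCoeff_apply] at *
    have e : ∀ j ∈ Finset.range (n + 1),
        PowerSeries.coeff (j + 1) A * PowerSeries.coeff (n + 1 - (j + 1)) z
          = PowerSeries.coeff (j + 1) A * PowerSeries.coeff (n - j) z := by
      intro j hj
      have : n + 1 - (j + 1) = n - j := by omega
      rw [this]
    rw [Finset.sum_congr rfl e, hA, one_mul]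
  by_cases hx : X ∣ x
  · rw [Tab, Tab, if_pos hx, if_pos (h0.mp hx), divq, divq, PowerSeries.coeff_mk,
      PowerSeries.coeff_mk]
    linear_combination two_cancel (PowerSeries.coeff (n + 1) x)
      - two_cancel (PowerSeries.coeff (n + 1) y)
  · rw [Tab, Tab, if_neg hx, if_neg (fun hy => hx (h0.mpr hy)), key x, key y]
    have hs : (∑ j ∈ Finset.range (n + 1),
            PowerSeries.coeff (j + 1) A * PowerSeries.coeff (n - j) x)
        = ∑ j ∈ Finset.range (n + 1),
            PowerSeries.coeff (j + 1) A * PowerSeries.coeff (n - j) y := by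
      apply Finset.sum_congr rfl
      intro j hj
      rw [h (n - j) (Nat.sub_le n j)]
    linear_combination hs + two_cancel (PowerSeries.coeff (n + 1) x)
      - two_cancel (PowerSeries.coeff (n + 1) y)

lemma Tab_iter (A B : PowerSeries (ZMod 2))
    (hA : PowerSeries.constantCoeff A = 1) :
    ∀ (k n : ℕ) (x y : PowerSeries (ZMod 2)),
      (∀ i < n + k, PowerSeries.coeff i x = PowerSeries.coeff i y) →
    PowerSeries.coeff n ((Tab A B)^[k] x) + PowerSeries.coeff (n + k) x
      = PowerSeries.coeff n ((Tab A B)^[k] y) + PowerSeries.coeff (n + k) y := by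
  intro k
  induction k with
  | zero =>
    intro n x y _
    simp only [Function.iterate_zero, id_eq, Nat.add_zero]
    rw [two_cancel, two_cancel]
  | succ k ih =>
    intro n x y h
    have hTagree : ∀ i < n + k,
        PowerSeries.coeff i (Tab A B x) = PowerSeries.coeff i (Tab A B y) := by
      intro i hi
      have hstep := Tab_step A B hA i x y (fun j hj => h j (by omega))
      have hx : PowerSeries.coeff (i + 1) x = PowerSeries.coeff (i + 1) y :=
        h (i + 1) (by omega)
      linear_combination hstep - hx
    have hmain := ih n (Tab A B x) (Tab A B y) hTagree
    have hlast := Tab_step A B hA (n + k) x y (fun j hj => h j (by omega))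
    rw [Function.iterate_succ_apply, Function.iterate_succ_apply]
    have e1 : n + (k + 1) = n + k + 1 := by omega
    rw [e1]
    linear_combination hmain + hlast
      - two_cancel (PowerSeries.coeff (n + k) (Tab A B x))
      + two_cancel (PowerSeries.coeff (n + k) (Tab A B y))

noncomputable def cseq (A B : PowerSeries (ZMod 2)) (s : ℕ → ZMod 2) : ℕ → ZMod 2
  | k => s k + PowerSeries.constantCoeff
      ((Tab A B)^[k] (PowerSeries.mk fun i => if h : i < k then cseq A B s i else 0))
  decreasing_by exact h

/-- For odd `A, B`: every binary sequence `s : ℕ → F₂` is the parity vector of some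
`a ∈ F₂[[q]]` (the parity vector map is surjective). -/
theorem Tab_parity_vector_surjective (A B : PowerSeries (ZMod 2))
    (hA : PowerSeries.constantCoeff A = 1)
    (hB : PowerSeries.constantCoeff B = 1)
    (s : ℕ → ZMod 2) :
    ∃ a : PowerSeries (ZMod 2),
      ∀ k : ℕ, PowerSeries.constantCoeff ((Tab A B)^[k] a) = s k := by
  refine ⟨PowerSeries.mk (cseq A B s), fun k => ?_⟩
  set y : PowerSeries (ZMod 2) := PowerSeries.mk fun i => if h : i < k then cseq A B s i else 0
    with hy
  have hagree : ∀ i < 0 + k, PowerSeries.coeff i (PowerSeries.mk (cseq A B s))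
      = PowerSeries.coeff i y := by
    intro i hi
    rw [hy, PowerSeries.coeff_mk, PowerSeries.coeff_mk, dif_pos (by omega : i < k)]
  have hiter := Tab_iter A B hA k 0 (PowerSeries.mk (cseq A B s)) y hagree
  rw [Nat.zero_add, PowerSeries.coeff_mk, PowerSeries.coeff_mk, dif_neg (lt_irrefl k)] at hiter
  have hc : cseq A B s k = s k + PowerSeries.constantCoeff ((Tab A B)^[k] y) := by
    rw [cseq]
  rw [← PowerSeries.coeff_zero_eq_constantCoeff_apply] at *
  rw [hc] at hiter
  linear_combination hiter - two_cancel (s k)
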